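/- Let k ≥ 1 and γ₁, γ₂ > 0, γ₃ ≥ 0, C(x) = log₂(1+x), S = C(γ₁)+C(γ₂). Define y₁ = ((2k-1)/(2k²))·C(γ₂)/S, y₂ = ((2k-1)/(2k²))·C(γ₁)/S, y₃ = (1/(2k))·C(γ₁)/S, y₄ = (1/(2k))·C(γ₂)/S, and y₅ = max{T₁,T₂,T₃,T₄} where T₁ = ((3k-1)/(2k²))·C(γ₁)C(γ₂)/S, T₂ = ((2k-1)/(2k²))·(C(γ₂)C(γ₁+γ₃)+C(γ₁)C(γ₃))/S, T₃ = ((2k-1)/(2k²))·(C(γ₂)C(γ₃)+C(γ₁)C((√γ₂+√γ₃)²))/S, T₄ = (1/(2k))·(C(γ₁)C(γ₃)+C(γ₂)C((√γ₁+√γ₃)²))/S. Then (y₁,…,y₅) satisfies all seven dual constraints: y₅ ≥ y₁C(γ₁+γ₃)+y₂C(γ₃); y₅ ≥ y₃C(γ₂+γ₃)+y₄C(γ₃); y₅ ≥ y₁C(γ₁)+y₃C(γ₂); y₅ ≥ y₂C(γ₂)+y₄C(γ₁); y₅ ≥ y₁C(γ₃)+y₂C((√γ₂+√γ₃)²); y₅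 ≥ y₃C(γ₃)+y₄C((√γ₁+√γ₃)²); k(y₁+y₂)+y₃+y₄ ≥ 1. -/

import Mathlib

/-- Dual feasibility of the specific dual variables of Theorem 4. -/
theorem dual_feasibility (γ₁ γ₂ γ₃ k : ℝ) (h1 : 0 < γ₁) (h2 : 0 < γ₂) (h3 : 0 ≤ γ₃)
    (hk : 1 ≤ k)
    (C : ℝ → ℝ) (hC : C = fun x => Real.logb 2 (1 + x))
    (S : ℝ) (hS : S = C γ₁ + C γ₂)
    (y₁ y₂ y₃ y₄ y₅ T₁ T₂ T₃ T₄ : ℝ)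
    (hy1 : y₁ = ((2 * k - 1) / (2 * k ^ 2)) * C γ₂ / S)
    (hy2 : y₂ = ((2 * k - 1) / (2 * k ^ 2)) * C γ₁ / S)
    (hy3 : y₃ = (1 / (2 * k)) * C γ₁ / S)
    (hy4 : y₄ = (1 / (2 * k)) * C γ₂ / S)
    (hT1 : T₁ = ((3 * k - 1) / (2 * k ^ 2)) * (C γ₁ * C γ₂) / S)
    (hT2 : T₂ = ((2 * k - 1) / (2 * k ^ 2)) * (C γ₂ * C (γ₁ + γ₃) + C γ₁ * C γ₃) / S)
    (hT3 : T₃ = ((2 * k - 1) / (2 * k ^ 2)) *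
      (C γ₂ * C γ₃ + C γ₁ * C ((Real.sqrt γ₂ + Real.sqrt γ₃) ^ 2)) / S)
    (hT4 : T₄ = (1 / (2 * k)) *
      (C γ₁ * C γ₃ + C γ₂ * C ((Real.sqrt γ₁ + Real.sqrt γ₃) ^ 2)) / S)
    (hy5 : y₅ = max (max T₁ T₂) (max T₃ T₄)) :
    y₁ * C (γ₁ + γ₃) + y₂ * C γ₃ ≤ y₅ ∧
    y₃ * C (γ₂ + γ₃) + y₄ * C γ₃ ≤ y₅ ∧
    y₁ * C γ₁ + y₃ * C γ₂ ≤ y₅ ∧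
    y₂ * C γ₂ + y₄ * C γ₁ ≤ y₅ ∧
    y₁ * C γ₃ + y₂ * C ((Real.sqrt γ₂ + Real.sqrt γ₃) ^ 2) ≤ y₅ ∧
    y₃ * C γ₃ + y₄ * C ((Real.sqrt γ₁ + Real.sqrt γ₃) ^ 2) ≤ y₅ ∧
    1 ≤ k * (y₁ + y₂) + y₃ + y₄ := by
  have hk0 : (0:ℝ) < k := by linarith
  have hCpos : ∀ x : ℝ, 0 < x → 0 < C x := by
    intro x hx
    rw [hC]
    exact Real.logb_pos one_lt_two (by linarith)
  have hCnn : ∀ x : ℝ, 0 ≤ x → 0 ≤ C x := by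
    intro x hx
    rw [hC]
    exact Real.logb_nonneg one_lt_two (by linarith)
  have hCmono : ∀ x y : ℝ, 0 ≤ x → x ≤ y → C x ≤ C y := by
    intro x y hx hxy
    rw [hC]
    exact Real.logb_le_logb_of_le one_lt_two (by linarith) (by linarith)
  have hc1 : 0 < C γ₁ := hCpos _ h1
  have hc2 : 0 < C γ₂ := hCpos _ h2
  have hc3 : 0 ≤ C γ₃ := hCnn _ h3
  have hS0 : 0 < S := by rw [hS]; linarith
  have hsq2 : γ₂ + γ₃ ≤ (Real.sqrt γ₂ + Real.sqrt γ₃) ^ 2 := by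
    nlinarith [Real.sq_sqrt h2.le, Real.sq_sqrt h3, Real.sqrt_nonneg γ₂, Real.sqrt_nonneg γ₃,
      mul_nonneg (Real.sqrt_nonneg γ₂) (Real.sqrt_nonneg γ₃)]
  have hcst2 : 0 ≤ C ((Real.sqrt γ₂ + Real.sqrt γ₃) ^ 2) := hCnn _ (sq_nonneg _)
  have hcst1 : 0 ≤ C ((Real.sqrt γ₁ + Real.sqrt γ₃) ^ 2) := hCnn _ (sq_nonneg _)
  have hab : 1 / (2 * k) ≤ (2 * k - 1) / (2 * k ^ 2) := by
    rw [div_le_div_iff₀ (by positivity) (by positivity)]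
    nlinarith
  have hbnn : (0:ℝ) ≤ 1 / (2 * k) := by positivity
  have c1 : y₁ * C (γ₁ + γ₃) + y₂ * C γ₃ ≤ y₅ := by
    have : y₁ * C (γ₁ + γ₃) + y₂ * C γ₃ = T₂ := by
      rw [hy1, hy2, hT2]; ring
    rw [this, hy5]
    exact le_max_of_le_left (le_max_right _ _)
  have c2 : y₃ * C (γ₂ + γ₃) + y₄ * C γ₃ ≤ y₅ := by
    have key : y₃ * C (γ₂ + γ₃) + y₄ * C γ₃ ≤ T₃ := by
      have hmono := hCmono (γ₂ + γ₃) _ (by linarith) hsq2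
      have step1 : y₃ * C (γ₂ + γ₃) + y₄ * C γ₃ ≤
          (1 / (2 * k)) * (C γ₂ * C γ₃ + C γ₁ * C ((Real.sqrt γ₂ + Real.sqrt γ₃) ^ 2)) / S := by
        rw [hy3, hy4]
        have h1' : (1 / (2 * k)) * C γ₁ / S * C (γ₂ + γ₃) ≤
            (1 / (2 * k)) * C γ₁ / S * C ((Real.sqrt γ₂ + Real.sqrt γ₃) ^ 2) := by
          apply mul_le_mul_of_nonneg_left hmono
          positivity
        have := add_le_add_left h1' ((1 / (2 * k)) * C γ₂ / S * C γ₃)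
        calc (1 / (2 * k)) * C γ₁ / S * C (γ₂ + γ₃) + (1 / (2 * k)) * C γ₂ / S * C γ₃
            ≤ (1 / (2 * k)) * C γ₁ / S * C ((Real.sqrt γ₂ + Real.sqrt γ₃) ^ 2)
              + (1 / (2 * k)) * C γ₂ / S * C γ₃ := this
          _ = (1 / (2 * k)) * (C γ₂ * C γ₃ + C γ₁ * C ((Real.sqrt γ₂ + Real.sqrt γ₃) ^ 2)) / S := by
              ring
      have step2 : (1 / (2 * k)) * (C γ₂ * C γ₃ + C γ₁ * C ((Real.sqrt γ₂ + Real.sqrt γ₃) ^ 2)) / S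
          ≤ T₃ := by
        rw [hT3]
        gcongr ?_ / S
        apply mul_le_mul_of_nonneg_right hab
        have := mul_nonneg hc2.le hc3
        have := mul_nonneg hc1.le hcst2
        linarith
      linarith
    rw [hy5]
    exact key.trans (le_max_of_le_right (le_max_left _ _))
  have c3 : y₁ * C γ₁ + y₃ * C γ₂ ≤ y₅ := by
    have : y₁ * C γ₁ + y₃ * C γ₂ = T₁ := by
      rw [hy1, hy3, hT1]
      field_simp
      ring
    rw [this, hy5]
    exact le_max_of_le_left (le_max_left _ _)
  have c4 : y₂ * C γ₂ + y₄ * C γ₁ ≤ y₅ := by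
    have : y₂ * C γ₂ + y₄ * C γ₁ = T₁ := by
      rw [hy2, hy4, hT1]
      field_simp
      ring
    rw [this, hy5]
    exact le_max_of_le_left (le_max_left _ _)
  have c5 : y₁ * C γ₃ + y₂ * C ((Real.sqrt γ₂ + Real.sqrt γ₃) ^ 2) ≤ y₅ := by
    have : y₁ * C γ₃ + y₂ * C ((Real.sqrt γ₂ + Real.sqrt γ₃) ^ 2) = T₃ := by
      rw [hy1, hy2, hT3]; ring
    rw [this, hy5]
    exact le_max_of_le_right (le_max_left _ _)
  have c6 : y₃ * C γ₃ + y₄ * C ((Real.sqrt γ₁ + Real.sqrt γ₃) ^ 2) ≤ y₅ := by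
    have : y₃ * C γ₃ + y₄ * C ((Real.sqrt γ₁ + Real.sqrt γ₃) ^ 2) = T₄ := by
      rw [hy3, hy4, hT4]; ring
    rw [this, hy5]
    exact le_max_of_le_right (le_max_right _ _)
  have c7 : 1 ≤ k * (y₁ + y₂) + y₃ + y₄ := by
    have : k * (y₁ + y₂) + y₃ + y₄ = 1 := by
      rw [hy1, hy2, hy3, hy4]
      have hSne : S ≠ 0 := ne_of_gt hS0
      have hkne : k ≠ 0 := ne_of_gt hk0
      field_simp
      rw [hS]
      ring
    linarith
  exact ⟨c1, c2, c3, c4, c5, c6, c7⟩
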